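/- Let μ be an atomless Borel probability measure on ℝ and μ^6 the product measure on (Fin 6 → ℝ). Then the probability of the event that positions 1 and 4 are local maxima and position 2 and position 3 are not local maxima equals 1/9; i.e. ⟨UDUUD⟩ + ⟨UDDUD⟩ = 1/9. -/

import Mathlib

open MeasureTheory

namespace UduudAux

open Finset

/-- compatibility pattern on the inverse permutation -/
abbrev P (σ : Equiv.Perm (Fin 6)) : Prop :=
  σ.symm 0 < σ.symm 1 ∧ σ.symm 2 < σ.symm 1 ∧ σ.symm 3 < σ.symm 4 ∧ σ.symm 5 < σ.symm 4 ∧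
    ¬(σ.symm 1 < σ.symm 2 ∧ σ.symm 3 < σ.symm 2) ∧ ¬(σ.symm 2 < σ.symm 3 ∧ σ.symm 4 < σ.symm 3)

set_option maxRecDepth 100000 in
set_option maxHeartbeats 1000000 in
lemma count_P : (Finset.univ.filter P).card = 80 := by decide

instance : WellFoundedLT (Fin 6) := inferInstance

/-- the ordering event -/
def A (σ : Equiv.Perm (Fin 6)) : Set (Fin 6 → ℝ) := {x | StrictMono (x ∘ σ)}

lemma measA (σ : Equiv.Perm (Fin 6)) : MeasurableSet (A σ) := by
  have : A σ = ⋂ (p : Fin 6 × Fin 6), ⋂ (_ : p.1 < p.2), {x : Fin 6 → ℝ | x (σ p.1) < x (σ p.2)} := by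
    ext x
    simp only [A, Set.mem_setOf_eq, Set.mem_iInter]
    exact ⟨fun h p hp => h hp, fun h a b hab => h (a, b) hab⟩
  rw [this]
  exact MeasurableSet.iInter fun p => MeasurableSet.iInter fun _ =>
    measurableSet_lt (measurable_pi_apply _) (measurable_pi_apply _)

lemma A_disjoint : Pairwise (Function.onFun Disjoint A) := by
  intro σ τ hne
  rw [Function.onFun, Set.disjoint_left]
  intro x hσ hτ
  apply hne
  have hinj : Function.Injective x := by
    intro a b hab
    have h1 : (x ∘ σ) (σ.symm a) = (x ∘ σ) (σ.symm b) := by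
      simp [Function.comp, hab]
    have := hσ.injective h1
    simpa using congrArg σ this
  have hr : Set.range (x ∘ ⇑σ) = Set.range (x ∘ ⇑τ) := by
    rw [Set.range_comp, Set.range_comp, σ.surjective.range_eq, τ.surjective.range_eq]
  have hσ' : StrictMono (x ∘ ⇑σ) := hσ
  have hτ' : StrictMono (x ∘ ⇑τ) := hτ
  have hco : x ∘ ⇑σ = x ∘ ⇑τ := (StrictMono.range_inj (β := Fin 6) (γ := ℝ) hσ' hτ').1 hr
  exact Equiv.ext fun k => hinj (congrFun hco k)

lemma inj_subset : {x : Fin 6 → ℝ | Function.Injective x} ⊆ ⋃ σ : Equiv.Perm (Fin 6), A σ := by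
  intro x hx
  refine Set.mem_iUnion.2 ⟨Tuple.sort x, ?_⟩
  exact (Tuple.monotone_sort x).strictMono_of_injective (hx.comp (Tuple.sort x).injective)

variable (μ : Measure ℝ) [IsProbabilityMeasure μ] [NullSingletonClass μ]

lemma pair_map {i j : Fin 6} (h : i ≠ j) :
    (Measure.pi fun _ : Fin 6 => μ).map (fun x => (x i, x j)) = μ.prod μ := by
  refine (Measure.prod_eq fun s t hs ht => ?_).symm
  rw [Measure.map_apply (by measurability) (hs.prod ht)]
  have heq : (fun x : Fin 6 → ℝ => (x i, x j)) ⁻¹' (s ×ˢ t)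
      = Set.pi Set.univ (fun k => if k = i then s else if k = j then t else Set.univ) := by
    ext x
    simp only [Set.mem_preimage, Set.mem_prod, Set.mem_pi, Set.mem_univ, forall_true_left]
    constructor
    · rintro ⟨h1, h2⟩ k
      split_ifs with hk hk'
      · subst hk; exact h1
      · subst hk'; exact h2
      · trivial
    · intro hk
      refine ⟨?_, ?_⟩
      · have := hk i; simpa using this
      · have := hk j; simpa [h.symm] using this
  rw [heq, Measure.pi_pi]
  rw [Finset.prod_eq_mul i j h
    (fun c _ hc => by simp [hc.1, hc.2])
    (fun hc => absurd (Finset.mem_univ i) hc)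
    (fun hc => absurd (Finset.mem_univ j) hc)]
  simp [h, h.symm]

lemma eq_null {i j : Fin 6} (h : i ≠ j) :
    (Measure.pi fun _ : Fin 6 => μ) {x | x i = x j} = 0 := by
  have hd : MeasurableSet {p : ℝ × ℝ | p.1 = p.2} :=
    measurableSet_eq_fun measurable_fst measurable_snd
  have h1 : {x : Fin 6 → ℝ | x i = x j} = (fun x : Fin 6 → ℝ => (x i, x j)) ⁻¹' {p | p.1 = p.2} :=
    rfl
  rw [h1, ← Measure.map_apply (by measurability) hd, pair_map μ h, Measure.prod_apply hd]
  have h2 : ∀ a : ℝ, (Prod.mk a ⁻¹' {p : ℝ × ℝ | p.1 = p.2}) = {a} := by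
    intro a; ext b; simp [eq_comm]
  simp [h2]

lemma noninj_null :
    (Measure.pi fun _ : Fin 6 => μ) {x | ¬ Function.Injective x} = 0 := by
  have hsub : {x : Fin 6 → ℝ | ¬ Function.Injective x} ⊆ ⋃ (p : Fin 6 × Fin 6), ⋃ (_ : p.1 ≠ p.2),
      {x : Fin 6 → ℝ | x p.1 = x p.2} := by
    intro x hx
    obtain ⟨a, b, hab, hne⟩ := Function.not_injective_iff.1 hx
    exact Set.mem_iUnion.2 ⟨(a, b), Set.mem_iUnion.2 ⟨hne, hab⟩⟩
  exact measure_mono_null hsub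
    (measure_iUnion_null fun p => measure_iUnion_null fun hp => eq_null μ hp)

lemma measure_A_eq (σ : Equiv.Perm (Fin 6)) :
    (Measure.pi fun _ : Fin 6 => μ) (A σ) = (Measure.pi fun _ : Fin 6 => μ) (A 1) := by
  have hmp := measurePreserving_piCongrLeft (fun _ : Fin 6 => μ) (σ.symm : Fin 6 ≃ Fin 6)
  have hT : ∀ x : Fin 6 → ℝ,
      (MeasurableEquiv.piCongrLeft (fun _ : Fin 6 => ℝ) (σ.symm : Fin 6 ≃ Fin 6)) x = x ∘ ⇑σ := by
    intro x; funext k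
    have h := Equiv.piCongrLeft_apply_apply (P := fun _ : Fin 6 => ℝ)
      (σ.symm : Fin 6 ≃ Fin 6) x (σ k)
    rw [MeasurableEquiv.coe_piCongrLeft]
    simpa using h
  have hpre : (MeasurableEquiv.piCongrLeft (fun _ : Fin 6 => ℝ) (σ.symm : Fin 6 ≃ Fin 6)) ⁻¹' A 1
      = A σ := by
    ext x
    simp only [Set.mem_preimage, A, Set.mem_setOf_eq, hT]
    constructor
    · intro hx; simpa [Function.comp] using hx
    · intro hx; simpa [Function.comp] using hx
  have := hmp.measure_preimage (measA 1).nullMeasurableSet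
  rw [hpre] at this
  exact this

end UduudAux

open UduudAux Finset

theorem uduud_plus_uddud_prob
    (μ : Measure ℝ) [IsProbabilityMeasure μ] [NullSingletonClass μ] :
    (Measure.pi fun _ : Fin 6 => μ)
      {x | x 0 < x 1 ∧ x 2 < x 1 ∧ x 3 < x 4 ∧ x 5 < x 4 ∧
           ¬(x 1 < x 2 ∧ x 3 < x 2) ∧ ¬(x 2 < x 3 ∧ x 4 < x 3)} = 1 / 9 := by
  set ν := Measure.pi fun _ : Fin 6 => μ with hν
  set E : Set (Fin 6 → ℝ) := {x | x 0 < x 1 ∧ x 2 < x 1 ∧ x 3 < x 4 ∧ x 5 < x 4 ∧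
           ¬(x 1 < x 2 ∧ x 3 < x 2) ∧ ¬(x 2 < x 3 ∧ x 4 < x 3)} with hE
  have hlt : ∀ a b : Fin 6, MeasurableSet {x : Fin 6 → ℝ | x a < x b} := fun a b =>
    measurableSet_lt (measurable_pi_apply a) (measurable_pi_apply b)
  have hEmeas : MeasurableSet E := by
    have : E = {x : Fin 6 → ℝ | x 0 < x 1} ∩ ({x | x 2 < x 1} ∩ ({x | x 3 < x 4} ∩
        ({x | x 5 < x 4} ∩ (({x | x 1 < x 2} ∩ {x | x 3 < x 2})ᶜ ∩
         ({x | x 2 < x 3} ∩ {x | x 4 < x 3})ᶜ)))) := by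
      ext x
      simp only [hE, Set.mem_setOf_eq, Set.mem_inter_iff, Set.mem_compl_iff]
      try tauto
    rw [this]
    exact (hlt 0 1).inter ((hlt 2 1).inter ((hlt 3 4).inter ((hlt 5 4).inter
      ((((hlt 1 2).inter (hlt 3 2)).compl).inter (((hlt 2 3).inter (hlt 4 3)).compl)))))
  set c := ν (A 1) with hc
  -- key: on A σ, order of coordinates is given by σ.symm
  have key : ∀ σ : Equiv.Perm (Fin 6), ∀ x ∈ A σ, ∀ k l : Fin 6,
      (x k < x l ↔ σ.symm k < σ.symm l) := by
    intro σ x hx k l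
    have hx' : StrictMono (x ∘ ⇑σ) := hx
    constructor
    · intro hkl
      refine hx'.lt_iff_lt.1 ?_
      simpa [Function.comp, Equiv.apply_symm_apply] using hkl
    · intro hkl
      have := hx' hkl
      simpa [Function.comp, Equiv.apply_symm_apply] using this
  have hinterA : ∀ σ : Equiv.Perm (Fin 6), E ∩ A σ = if P σ then A σ else ∅ := by
    intro σ
    split_ifs with hP
    · refine Set.inter_eq_right.mpr fun x hx => ?_
      simp only [hE, Set.mem_setOf_eq]
      rw [key σ x hx, key σ x hx, key σ x hx, key σ x hx, key σ x hx, key σ x hx,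
        key σ x hx, key σ x hx]
      exact hP
    · ext x
      simp only [Set.mem_inter_iff, Set.mem_empty_iff_false, iff_false, not_and]
      intro hxE hxA
      apply hP
      have hxE' := hxE
      simp only [hE, Set.mem_setOf_eq] at hxE'
      rw [key σ x hxA, key σ x hxA, key σ x hxA, key σ x hxA, key σ x hxA, key σ x hxA,
        key σ x hxA, key σ x hxA] at hxE'
      exact hxE'
  -- total measure of the union of orderings is 1
  have hUmeas : MeasurableSet (⋃ σ : Equiv.Perm (Fin 6), A σ) :=
    MeasurableSet.iUnion fun σ => measA σ
  have hsumU : ν (⋃ σ : Equiv.Perm (Fin 6), A σ) = ∑ σ : Equiv.Perm (Fin 6), ν (A σ) := by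
    rw [measure_iUnion A_disjoint measA, tsum_fintype]
  have hAc : ∀ σ : Equiv.Perm (Fin 6), ν (A σ) = c := fun σ => measure_A_eq μ σ
  have hU1 : ν (⋃ σ : Equiv.Perm (Fin 6), A σ) = 1 := by
    refine le_antisymm (le_trans (measure_mono (Set.subset_univ _)) (by simp)) ?_
    have hsub : (Set.univ : Set (Fin 6 → ℝ)) ⊆
        (⋃ σ : Equiv.Perm (Fin 6), A σ) ∪ {x | ¬ Function.Injective x} := by
      intro x _
      by_cases hx : Function.Injective x
      · exact Or.inl (inj_subset hx)
      · exact Or.inr hx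
    calc (1 : ENNReal) = ν Set.univ := by simp
      _ ≤ ν ((⋃ σ : Equiv.Perm (Fin 6), A σ) ∪ {x | ¬ Function.Injective x}) :=
        measure_mono hsub
      _ ≤ ν (⋃ σ : Equiv.Perm (Fin 6), A σ) + ν {x | ¬ Function.Injective x} :=
        measure_union_le _ _
      _ = ν (⋃ σ : Equiv.Perm (Fin 6), A σ) := by rw [noninj_null μ, add_zero]
  have h720 : (720 : ENNReal) * c = 1 := by
    have hcard : Fintype.card (Equiv.Perm (Fin 6)) = 720 := by
      rw [Fintype.card_perm, Fintype.card_fin]; rfl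
    have : ∑ σ : Equiv.Perm (Fin 6), ν (A σ) = (720 : ENNReal) * c := by
      rw [Finset.sum_congr rfl fun σ _ => hAc σ, Finset.sum_const, Finset.card_univ, hcard]
      simp [nsmul_eq_mul]
    rw [← hU1, hsumU, this]
  have hcval : c = (720 : ENNReal)⁻¹ := by
    have h7 : (720 : ENNReal) ≠ 0 := by norm_num
    have h7' : (720 : ENNReal) ≠ ⊤ := by norm_num
    calc c = (720 : ENNReal)⁻¹ * ((720 : ENNReal) * c) := by
            rw [← mul_assoc, ENNReal.inv_mul_cancel h7 h7', one_mul]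
      _ = (720 : ENNReal)⁻¹ := by rw [h720, mul_one]
  -- measure of E
  have hEdiff : ν (E \ ⋃ σ : Equiv.Perm (Fin 6), A σ) = 0 := by
    refine measure_mono_null (fun x hx => ?_) (noninj_null μ)
    intro hinj
    exact hx.2 (inj_subset hinj)
  have hsplit : ν (E ∩ ⋃ σ : Equiv.Perm (Fin 6), A σ) + ν (E \ ⋃ σ : Equiv.Perm (Fin 6), A σ)
      = ν E := measure_inter_add_diff E hUmeas
  have hEU : ν E = ν (E ∩ ⋃ σ : Equiv.Perm (Fin 6), A σ) := by
    rw [← hsplit, hEdiff, add_zero]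
  have hinterU : E ∩ (⋃ σ : Equiv.Perm (Fin 6), A σ) = ⋃ σ : Equiv.Perm (Fin 6), E ∩ A σ := by
    rw [Set.inter_iUnion]
  have hdisj' : Pairwise (Function.onFun Disjoint fun σ : Equiv.Perm (Fin 6) => E ∩ A σ) :=
    fun σ τ hne => ((A_disjoint hne).mono Set.inter_subset_right Set.inter_subset_right)
  have hsumE : ν (⋃ σ : Equiv.Perm (Fin 6), E ∩ A σ) = ∑ σ : Equiv.Perm (Fin 6), ν (E ∩ A σ) := by
    rw [measure_iUnion hdisj' fun σ => hEmeas.inter (measA σ), tsum_fintype]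
  have hterm : ∀ σ : Equiv.Perm (Fin 6), ν (E ∩ A σ) = if P σ then c else 0 := by
    intro σ
    rw [hinterA σ]
    split_ifs with hP
    · exact hAc σ
    · simp
  have hsum80 : ∑ σ : Equiv.Perm (Fin 6), ν (E ∩ A σ) = (80 : ENNReal) * c := by
    rw [Finset.sum_congr rfl fun σ _ => hterm σ, ← Finset.sum_filter, Finset.sum_const, count_P]
    simp [nsmul_eq_mul]
  rw [hEU, hinterU, hsumE, hsum80, hcval]
  rw [ENNReal.eq_div_iff (by norm_num) (by norm_num)]
  rw [← mul_assoc]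
  rw [show (9 : ENNReal) * 80 = 720 by norm_num]
  exact ENNReal.mul_inv_cancel (by norm_num) (by norm_num)
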